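/- Let L ≥ 5 be odd and m = (L+3)/2. Let A be the adjacency matrix of the graph A_L, D the adjacency matrix of the graph D_m, and C the explicit L×m intertwiner cell matrix. Then C intertwines the two adjacency matrices: A*C = C*D. -/
import Mathlib


open Matrix

/-- Adjacency matrix of the graph `A_L`, with vertices `1,…,L` encoded as `Fin L`
(vertex `a` is `a+1` in 1-based labelling): `A_{a,a'} = 1` iff `|a − a'| = 1`. -/
def adjA (L : ℕ) : Matrix (Fin L) (Fin L) ℤ := fun a a' =>
  if (a : ℕ) + 1 = (a' : ℕ) ∨ (a' : ℕ) + 1 = (a : ℕ) then 1 else 0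

/-- Adjacency matrix of the graph `D_m`, with vertices `1,…,m` encoded as `Fin m`.
In 1-based labels the edges are `{b,b+1}` for `1 ≤ b ≤ m−3`, `{m−2,m−1}` and
`{m−2,m}`; i.e. all consecutive pairs except `{m−1,m}`, plus the pair `{m−2,m}`.
In the 0-based encoding, `b` and `b'` are adjacent iff they are consecutive with
`b + b' + 3 ≠ 2m` (excluding the 1-based pair `{m−1,m}`), or differ by 2 with
`b + b' + 4 = 2m` (the 1-based pair `{m−2,m}`). -/
def adjD (m : ℕ) : Matrix (Fin m) (Fin m) ℤ := fun b b' =>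
  if ((b : ℕ) + 1 = (b' : ℕ) ∨ (b' : ℕ) + 1 = (b : ℕ)) ∧ (b : ℕ) + (b' : ℕ) + 3 ≠ 2 * m then 1
  else if ((b : ℕ) + 2 = (b' : ℕ) ∨ (b' : ℕ) + 2 = (b : ℕ)) ∧ (b : ℕ) + (b' : ℕ) + 4 = 2 * m then 1
  else 0

/-- The explicit `L×m` intertwiner cell matrix between `A_L` and `D_m`
(for odd `L` and `m = (L+3)/2`).  In 1-based labels:
`C_{a,b} = δ_{a,b} + δ_{a,L+1−b}` for `1 ≤ b ≤ m−2`, and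
`C_{a,m−1} = C_{a,m} = δ_{a,(L+1)/2}`.  In the 0-based encoding, for
`b + 3 ≤ m` the entry is `δ_{a,b} + δ_{a+b+1,L}`, and otherwise it is
`δ_{a+1,(L+1)/2}`. -/
def interC (L m : ℕ) : Matrix (Fin L) (Fin m) ℤ := fun a b =>
  if (b : ℕ) + 3 ≤ m then
    (if (a : ℕ) = (b : ℕ) then 1 else 0) + (if (a : ℕ) + (b : ℕ) + 1 = L then 1 else 0)
  else
    if (a : ℕ) + 1 = (L + 1) / 2 then 1 else 0

/-- Permutation matrix of the height reversal `a ↦ L+1−a` of `A_L`: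
`(R_A)_{a,a'} = δ_{a',L+1−a}`, i.e. in the 0-based encoding `a + a' + 1 = L`. -/
def heightRevA (L : ℕ) : Matrix (Fin L) (Fin L) ℤ := fun a a' =>
  if (a : ℕ) + (a' : ℕ) + 1 = L then 1 else 0

/-- Permutation matrix of the height reversal of `D_m`, fixing `1,…,m−2` and
interchanging `m−1` with `m`.  In the 0-based encoding, `b` with `b + 3 ≤ m` is
fixed, and otherwise `b` is sent to the `b'` with `b + b' + 3 = 2m`. -/
def heightRevD (m : ℕ) : Matrix (Fin m) (Fin m) ℤ := fun b b' =>
  if (b : ℕ) + 3 ≤ m then (if b = b' then 1 else 0)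
  else (if (b : ℕ) + (b' : ℕ) + 3 = 2 * m then 1 else 0)

/-- For odd `L ≥ 5` and `m = (L+3)/2`, the explicit cell matrix `C` intertwines
the adjacency matrices of `A_L` and `D_m`: `A*C = C*D`. -/
private def Cx (L m a b : ℕ) : ℤ :=
  if b + 3 ≤ m then
    (if a = b then 1 else 0) + (if a + b + 1 = L then 1 else 0)
  else if b < m ∧ a + 1 = (L + 1) / 2 then 1 else 0

private lemma Cx_big_right (L m a b : ℕ) (h : m ≤ b) : Cx L m a b = 0 := by
  unfold Cx
  rw [if_neg (by omega), if_neg (by omega)]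

private lemma Cx_big_left (L m a b : ℕ) (h2m : L + 3 = 2 * m) (h : L ≤ a) :
    Cx L m a b = 0 := by
  unfold Cx
  split_ifs <;> first | omega | exact (‹False›).elim

private lemma sum_delta_eq {n : ℕ} (k : ℕ) (g : ℕ → ℤ) (hg : ∀ j, n ≤ j → g j = 0) :
    (∑ i : Fin n, if (i : ℕ) = k then g (i : ℕ) else 0) = g k := by
  by_cases hk : k < n
  · rw [Finset.sum_eq_single ⟨k, hk⟩]
    · simp
    · intro i _ hi
      rw [if_neg]
      exact fun h => hi (Fin.ext h)
    · simp
  · rw [hg k (by omega)]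
    apply Finset.sum_eq_zero
    intro i _
    rw [if_neg]
    have := i.isLt
    omega

private lemma sum_delta_shift {n : ℕ} (c k : ℕ) (g : ℕ → ℤ) (hg : ∀ j, n ≤ j → g j = 0) :
    (∑ i : Fin n, if (i : ℕ) + c = k then g (i : ℕ) else 0)
      = if c ≤ k then g (k - c) else 0 := by
  by_cases hc : c ≤ k
  · rw [if_pos hc]
    have h : ∀ j : ℕ, (j + c = k) ↔ (j = k - c) := fun j => by omega
    simp_rw [h]
    exact sum_delta_eq (k - c) g hg
  · rw [if_neg hc]
    apply Finset.sum_eq_zero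
    intro i _
    rw [if_neg (by omega)]

private lemma interC_eq (L m : ℕ) (a : Fin L) (b : Fin m) :
    interC L m a b = Cx L m (a : ℕ) (b : ℕ) := by
  have hb := b.isLt
  unfold interC Cx
  split_ifs <;> first | rfl | omega

private lemma zoneGoal1 (L m a b : ℕ) (h2m : L + 3 = 2 * m) (hL : 5 ≤ L)
    (ha : a < L) (hb : b < m) (hz : b + 4 ≤ m) :
    Cx L m (a + 1) b + (if 1 ≤ a then Cx L m (a - 1) b else 0)
      = (if 1 ≤ b then (if 2 * b + 2 ≠ 2 * m then Cx L m a (b - 1) else 0) else 0)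
        + (if 2 * b + 4 ≠ 2 * m then Cx L m a (b + 1) else 0)
        + (if 2 ≤ b then (if 2 * b + 2 = 2 * m then Cx L m a (b - 2) else 0) else 0)
        + (if 2 * b + 6 = 2 * m then Cx L m a (b + 2) else 0) := by
  simp only [Cx, ne_eq,
    eq_false (show ¬(2 * b + 2 = 2 * m) by omega),
    eq_false (show ¬(2 * b + 4 = 2 * m) by omega),
    eq_false (show ¬(2 * b + 6 = 2 * m) by omega),
    eq_true (show b + 3 ≤ m by omega),
    eq_true (show b - 1 + 3 ≤ m by omega),
    eq_true (show b + 1 + 3 ≤ m by omega),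
    not_false_eq_true, not_true_eq_false,
    if_true, if_false, ite_self, add_zero, zero_add]
  by_cases ha1 : 1 ≤ a
  · by_cases hb1 : 1 ≤ b
    · simp only [if_pos ha1, if_pos hb1,
        show (a = b - 1) ↔ (a + 1 = b) from by omega,
        show (a - 1 = b) ↔ (a = b + 1) from by omega,
        show (a - 1 + b + 1 = L) ↔ (a + b = L) from by omega,
        show (a + (b - 1) + 1 = L) ↔ (a + b = L) from by omega,
        show (a + 1 + b + 1 = L) ↔ (a + b + 2 = L) from by omega,
        show (a + (b + 1) + 1 = L) ↔ (a + b + 2 = L) from by omega]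
      split_ifs <;> first | omega | exact (‹False›).elim
    · have hb0 : b = 0 := by omega
      subst hb0
      simp only [if_pos ha1, if_neg hb1]
      split_ifs <;> first | omega | exact (‹False›).elim
  · have ha0 : a = 0 := by omega
    subst ha0
    simp only [if_neg ha1]
    split_ifs <;> first | omega | exact (‹False›).elim

private lemma zoneGoal2 (L m a b : ℕ) (h2m : L + 3 = 2 * m) (hL : 5 ≤ L)
    (ha : a < L) (hb : b < m) (hz : b + 3 = m) :
    Cx L m (a + 1) b + (if 1 ≤ a then Cx L m (a - 1) b else 0)
      = (if 1 ≤ b then (if 2 * b + 2 ≠ 2 * m then Cx L m a (b - 1) else 0) else 0)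
        + (if 2 * b + 4 ≠ 2 * m then Cx L m a (b + 1) else 0)
        + (if 2 ≤ b then (if 2 * b + 2 = 2 * m then Cx L m a (b - 2) else 0) else 0)
        + (if 2 * b + 6 = 2 * m then Cx L m a (b + 2) else 0) := by
  have hmid : (L + 1) / 2 = m - 1 := by omega
  simp only [Cx, ne_eq, hmid,
    eq_false (show ¬(2 * b + 2 = 2 * m) by omega),
    eq_false (show ¬(2 * b + 4 = 2 * m) by omega),
    eq_true (show 2 * b + 6 = 2 * m by omega),
    eq_true (show b + 3 ≤ m by omega),
    eq_true (show b - 1 + 3 ≤ m by omega),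
    eq_false (show ¬(b + 1 + 3 ≤ m) by omega),
    eq_true (show b + 1 < m by omega),
    eq_false (show ¬(b + 2 + 3 ≤ m) by omega),
    eq_true (show b + 2 < m by omega),
    eq_true (show 1 ≤ b by omega),
    not_false_eq_true, not_true_eq_false,
    if_true, if_false, ite_self, true_and, and_true, false_and, and_false,
    add_zero, zero_add]
  by_cases ha1 : 1 ≤ a
  · simp only [if_pos ha1,
      show (a = b - 1) ↔ (a + 1 = b) from by omega,
      show (a - 1 = b) ↔ (a = b + 1) from by omega,
      show (a - 1 + b + 1 = L) ↔ (a + b = L) from by omega,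
      show (a + (b - 1) + 1 = L) ↔ (a + b = L) from by omega,
      show (a + 1 + b + 1 = L) ↔ (a + b + 2 = L) from by omega]
    split_ifs <;> first | omega | exact (‹False›).elim
  · have ha0 : a = 0 := by omega
    subst ha0
    simp only [if_neg ha1]
    split_ifs <;> first | omega | exact (‹False›).elim

private lemma zoneGoal3 (L m a b : ℕ) (h2m : L + 3 = 2 * m) (hL : 5 ≤ L)
    (ha : a < L) (hb : b < m) (hz : b + 2 = m) :
    Cx L m (a + 1) b + (if 1 ≤ a then Cx L m (a - 1) b else 0)
      = (if 1 ≤ b then (if 2 * b + 2 ≠ 2 * m then Cx L m a (b - 1) else 0) else 0)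
        + (if 2 * b + 4 ≠ 2 * m then Cx L m a (b + 1) else 0)
        + (if 2 ≤ b then (if 2 * b + 2 = 2 * m then Cx L m a (b - 2) else 0) else 0)
        + (if 2 * b + 6 = 2 * m then Cx L m a (b + 2) else 0) := by
  have hmid : (L + 1) / 2 = m - 1 := by omega
  simp only [Cx, ne_eq, hmid,
    eq_false (show ¬(2 * b + 2 = 2 * m) by omega),
    eq_true (show 2 * b + 4 = 2 * m by omega),
    eq_false (show ¬(2 * b + 6 = 2 * m) by omega),
    eq_false (show ¬(b + 3 ≤ m) by omega),
    eq_true (show b < m by omega),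
    eq_true (show b - 1 + 3 ≤ m by omega),
    eq_true (show 1 ≤ b by omega),
    not_false_eq_true, not_true_eq_false,
    if_true, if_false, ite_self, true_and, and_true, false_and, and_false,
    add_zero, zero_add]
  split_ifs <;> first | omega | exact (‹False›).elim

private lemma zoneGoal4 (L m a b : ℕ) (h2m : L + 3 = 2 * m) (hL : 5 ≤ L)
    (ha : a < L) (hb : b < m) (hz : b + 1 = m) :
    Cx L m (a + 1) b + (if 1 ≤ a then Cx L m (a - 1) b else 0)
      = (if 1 ≤ b then (if 2 * b + 2 ≠ 2 * m then Cx L m a (b - 1) else 0) else 0)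
        + (if 2 * b + 4 ≠ 2 * m then Cx L m a (b + 1) else 0)
        + (if 2 ≤ b then (if 2 * b + 2 = 2 * m then Cx L m a (b - 2) else 0) else 0)
        + (if 2 * b + 6 = 2 * m then Cx L m a (b + 2) else 0) := by
  have hmid : (L + 1) / 2 = m - 1 := by omega
  simp only [Cx, ne_eq, hmid,
    eq_true (show 2 * b + 2 = 2 * m by omega),
    eq_false (show ¬(2 * b + 4 = 2 * m) by omega),
    eq_false (show ¬(2 * b + 6 = 2 * m) by omega),
    eq_false (show ¬(b + 3 ≤ m) by omega),
    eq_true (show b < m by omega),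
    eq_false (show ¬(b + 1 + 3 ≤ m) by omega),
    eq_false (show ¬(b + 1 < m) by omega),
    eq_true (show b - 2 + 3 ≤ m by omega),
    eq_true (show 2 ≤ b by omega),
    not_false_eq_true, not_true_eq_false,
    if_true, if_false, ite_self, true_and, and_true, false_and, and_false,
    add_zero, zero_add]
  split_ifs <;> first | omega | exact (‹False›).elim

theorem adjacency_intertwining (L : ℕ) (hL : 5 ≤ L) (hodd : Odd L)
    (m : ℕ) (hm : m = (L + 3) / 2) :
    adjA L * interC L m = interC L m * adjD m := by
  have h2m : L + 3 = 2 * m := by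
    obtain ⟨t, ht⟩ := hodd; omega
  ext a b
  have ha := a.isLt
  have hb := b.isLt
  rw [Matrix.mul_apply, Matrix.mul_apply]
  have HL : ∀ a' : Fin L, adjA L a a' * interC L m a' b
      = (if (a' : ℕ) = (a : ℕ) + 1 then Cx L m (a' : ℕ) (b : ℕ) else 0)
        + (if (a' : ℕ) + 1 = (a : ℕ) then Cx L m (a' : ℕ) (b : ℕ) else 0) := by
    intro a'
    rw [interC_eq]
    unfold adjA
    split_ifs <;> first | ring1 | (exfalso; omega)
  have HR : ∀ b' : Fin m, interC L m a b' * adjD m b' b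
      = (if (b' : ℕ) + 1 = (b : ℕ) then
          (if 2 * (b : ℕ) + 2 ≠ 2 * m then Cx L m (a : ℕ) (b' : ℕ) else 0) else 0)
        + (if (b' : ℕ) = (b : ℕ) + 1 then
          (if 2 * (b : ℕ) + 4 ≠ 2 * m then Cx L m (a : ℕ) (b' : ℕ) else 0) else 0)
        + (if (b' : ℕ) + 2 = (b : ℕ) then
          (if 2 * (b : ℕ) + 2 = 2 * m then Cx L m (a : ℕ) (b' : ℕ) else 0) else 0)
        + (if (b' : ℕ) = (b : ℕ) + 2 then
          (if 2 * (b : ℕ) + 6 = 2 * m then Cx L m (a : ℕ) (b' : ℕ) else 0) else 0) := by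
    intro b'
    rw [interC_eq]
    unfold adjD
    split_ifs <;> first | ring1 | (exfalso; omega)
  simp only [HL, HR]
  simp only [Finset.sum_add_distrib]
  have hgL : ∀ j, L ≤ j → Cx L m j (b : ℕ) = 0 :=
    fun j hj => Cx_big_left L m j (b : ℕ) h2m hj
  have S1 : (∑ a' : Fin L, if (a' : ℕ) = (a : ℕ) + 1 then Cx L m (a' : ℕ) (b : ℕ) else 0)
      = Cx L m ((a : ℕ) + 1) (b : ℕ) :=
    sum_delta_eq ((a : ℕ) + 1) (fun j => Cx L m j (b : ℕ)) hgL
  have S2 : (∑ a' : Fin L, if (a' : ℕ) + 1 = (a : ℕ) then Cx L m (a' : ℕ) (b : ℕ) else 0)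
      = if 1 ≤ (a : ℕ) then Cx L m ((a : ℕ) - 1) (b : ℕ) else 0 :=
    sum_delta_shift 1 (a : ℕ) (fun j => Cx L m j (b : ℕ)) hgL
  have hgR1 : ∀ j, m ≤ j →
      (if 2 * (b : ℕ) + 2 ≠ 2 * m then Cx L m (a : ℕ) j else 0) = 0 := by
    intro j hj; split_ifs with h
    · exact Cx_big_right L m (a : ℕ) j hj
    · rfl
  have hgR2 : ∀ j, m ≤ j →
      (if 2 * (b : ℕ) + 4 ≠ 2 * m then Cx L m (a : ℕ) j else 0) = 0 := by
    intro j hj; split_ifs with h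
    · exact Cx_big_right L m (a : ℕ) j hj
    · rfl
  have hgR3 : ∀ j, m ≤ j →
      (if 2 * (b : ℕ) + 2 = 2 * m then Cx L m (a : ℕ) j else 0) = 0 := by
    intro j hj; split_ifs with h
    · exact Cx_big_right L m (a : ℕ) j hj
    · rfl
  have hgR4 : ∀ j, m ≤ j →
      (if 2 * (b : ℕ) + 6 = 2 * m then Cx L m (a : ℕ) j else 0) = 0 := by
    intro j hj; split_ifs with h
    · exact Cx_big_right L m (a : ℕ) j hj
    · rfl
  have R1 : (∑ b' : Fin m, if (b' : ℕ) + 1 = (b : ℕ) then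
        (if 2 * (b : ℕ) + 2 ≠ 2 * m then Cx L m (a : ℕ) (b' : ℕ) else 0) else 0)
      = if 1 ≤ (b : ℕ) then
          (if 2 * (b : ℕ) + 2 ≠ 2 * m then Cx L m (a : ℕ) ((b : ℕ) - 1) else 0) else 0 :=
    sum_delta_shift 1 (b : ℕ)
      (fun j => if 2 * (b : ℕ) + 2 ≠ 2 * m then Cx L m (a : ℕ) j else 0) hgR1
  have R2 : (∑ b' : Fin m, if (b' : ℕ) = (b : ℕ) + 1 then
        (if 2 * (b : ℕ) + 4 ≠ 2 * m then Cx L m (a : ℕ) (b' : ℕ) else 0) else 0)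
      = if 2 * (b : ℕ) + 4 ≠ 2 * m then Cx L m (a : ℕ) ((b : ℕ) + 1) else 0 :=
    sum_delta_eq ((b : ℕ) + 1)
      (fun j => if 2 * (b : ℕ) + 4 ≠ 2 * m then Cx L m (a : ℕ) j else 0) hgR2
  have R3 : (∑ b' : Fin m, if (b' : ℕ) + 2 = (b : ℕ) then
        (if 2 * (b : ℕ) + 2 = 2 * m then Cx L m (a : ℕ) (b' : ℕ) else 0) else 0)
      = if 2 ≤ (b : ℕ) then
          (if 2 * (b : ℕ) + 2 = 2 * m then Cx L m (a : ℕ) ((b : ℕ) - 2) else 0) else 0 :=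
    sum_delta_shift 2 (b : ℕ)
      (fun j => if 2 * (b : ℕ) + 2 = 2 * m then Cx L m (a : ℕ) j else 0) hgR3
  have R4 : (∑ b' : Fin m, if (b' : ℕ) = (b : ℕ) + 2 then
        (if 2 * (b : ℕ) + 6 = 2 * m then Cx L m (a : ℕ) (b' : ℕ) else 0) else 0)
      = if 2 * (b : ℕ) + 6 = 2 * m then Cx L m (a : ℕ) ((b : ℕ) + 2) else 0 :=
    sum_delta_eq ((b : ℕ) + 2)
      (fun j => if 2 * (b : ℕ) + 6 = 2 * m then Cx L m (a : ℕ) j else 0) hgR4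
  rw [S1, S2, R1, R2, R3, R4]
  by_cases hz1 : (b : ℕ) + 4 ≤ m
  · exact zoneGoal1 L m (a : ℕ) (b : ℕ) h2m hL ha hb hz1
  · by_cases hz2 : (b : ℕ) + 3 = m
    · exact zoneGoal2 L m (a : ℕ) (b : ℕ) h2m hL ha hb hz2
    · by_cases hz3 : (b : ℕ) + 2 = m
      · exact zoneGoal3 L m (a : ℕ) (b : ℕ) h2m hL ha hb hz3
      · exact zoneGoal4 L m (a : ℕ) (b : ℕ) h2m hL ha hb (by omega)
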